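/- For every (x0, alpha0) in the extended Pareto critical manifold M (assuming rank D F-tilde = n on M so that M is a C^1 manifold), the projection onto the x-coordinates of the tangent space T_{(x0,alpha0)} M is contained in the tangent cone Tan(P_int, x0). -/

import Mathlib

noncomputable def grad (n : ℕ) (g : (Fin n → ℝ) → ℝ) (x : Fin n → ℝ) : Fin n → ℝ :=
  fun j => fderiv ℝ g x (Pi.single j 1)

noncomputable def Ftilde (n K : ℕ) (f : Fin (K + 1) → (Fin n → ℝ) → ℝ)
    (p : (Fin n → ℝ) × (Fin K → ℝ)) : Fin n → ℝ :=
  (∑ i : Fin K, p.2 i •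
      (grad n (f i.castSucc) p.1 - grad n (f (Fin.last K)) p.1))
    + grad n (f (Fin.last K)) p.1

def openSimplex (K : ℕ) : Set (Fin K → ℝ) := {α | (∀ i, 0 < α i) ∧ ∑ i, α i < 1}

def ParetoCriticalInt (n K : ℕ) (f : Fin (K + 1) → (Fin n → ℝ) → ℝ) : Set (Fin n → ℝ) :=
  {x | ∃ α ∈ openSimplex K, Ftilde n K f (x, α) = 0}

def Tan {E : Type*} [NormedAddCommGroup E] [NormedSpace ℝ E] (Y : Set E) (x : E) :
    Set E :=
  {v | v = 0 ∨ ∃ u : ℕ → E, (∀ i, u i ≠ 0) ∧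
    Filter.Tendsto u Filter.atTop (nhds 0) ∧ (∀ i, x + u i ∈ Y) ∧
    Filter.Tendsto (fun i => ‖u i‖⁻¹ • u i) Filter.atTop (nhds (‖v‖⁻¹ • v))}

lemma isOpen_openSimplex (K : ℕ) : IsOpen (openSimplex K) := by
  have h1 : IsOpen {α : Fin K → ℝ | ∀ i, 0 < α i} := by
    rw [Set.setOf_forall]
    exact isOpen_iInter_of_finite fun i =>
      isOpen_lt continuous_const (continuous_apply i)
  have h2 : IsOpen {α : Fin K → ℝ | ∑ i, α i < 1} :=
    isOpen_lt (continuous_finset_sum _ fun i _ => continuous_apply i) continuous_const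
  rw [openSimplex, Set.setOf_and]
  exact h1.inter h2

lemma contDiff_grad (n : ℕ) (g : (Fin n → ℝ) → ℝ) (hg : ContDiff ℝ 2 g) :
    ContDiff ℝ 1 (grad n g) := by
  have h1 : ContDiff ℝ 1 (fderiv ℝ g) := hg.fderiv_right (by norm_num)
  exact contDiff_pi.2 fun j => h1.clm_apply contDiff_const

lemma contDiff_Ftilde (n K : ℕ) (f : Fin (K + 1) → (Fin n → ℝ) → ℝ)
    (hf : ∀ i, ContDiff ℝ 2 (f i)) : ContDiff ℝ 1 (Ftilde n K f) := by
  have hB : ContDiff ℝ 1 fun p : (Fin n → ℝ) × (Fin K → ℝ) =>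
      grad n (f (Fin.last K)) p.1 :=
    (contDiff_grad n _ (hf _)).comp contDiff_fst
  refine ContDiff.add (ContDiff.sum fun i _ => ?_) hB
  refine ContDiff.smul (𝕜' := ℝ) ?_ (((contDiff_grad n _ (hf _)).comp contDiff_fst).sub hB)
  exact ((ContinuousLinearMap.proj i : (Fin K → ℝ) →L[ℝ] ℝ)).contDiff.comp contDiff_snd

/-- the projection onto the `x`-coordinates of the tangent space
`T_{(x₀,α₀)} M = ker D F̃(x₀,α₀)` is contained in the tangent cone of `P_int` at `x₀`. -/
theorem proj_tangent_space_subset_tangent_cone (n K : ℕ) (hK : 0 < K)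
    (f : Fin (K + 1) → (Fin n → ℝ) → ℝ) (hf : ∀ i, ContDiff ℝ 2 (f i))
    (M : Set ((Fin n → ℝ) × (Fin K → ℝ)))
    (hM : M = {p | p.2 ∈ openSimplex K ∧ Ftilde n K f p = 0})
    (hrank : ∀ p ∈ M,
      LinearMap.rank ((fderiv ℝ (Ftilde n K f) p :
        ((Fin n → ℝ) × (Fin K → ℝ)) →ₗ[ℝ] (Fin n → ℝ))) = (n : Cardinal)) :
    ∀ p ∈ M,
      (fun q : (Fin n → ℝ) × (Fin K → ℝ) => q.1) ''
          (LinearMap.ker (fderiv ℝ (Ftilde n K f) p :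
            ((Fin n → ℝ) × (Fin K → ℝ)) →ₗ[ℝ] (Fin n → ℝ)) : Set ((Fin n → ℝ) × (Fin K → ℝ)))
        ⊆ Tan (ParetoCriticalInt n K f) p.1 := by
  intro p hp v hv
  obtain ⟨w, hw, rfl⟩ := hv
  have hp' := hp
  rw [hM] at hp'
  obtain ⟨hα, hF0⟩ := hp'
  by_cases hv0 : w.1 = 0
  · exact Or.inl hv0
  right
  set F := Ftilde n K f with hFdef
  have hFc : ContDiff ℝ 1 F := contDiff_Ftilde n K f hf
  set f' := fderiv ℝ F p with hf'def
  have hsd : HasStrictFDerivAt F f' p := hFc.contDiffAt.hasStrictFDerivAt one_ne_zero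
  -- surjectivity of f'
  have hr := hrank p hp
  have hrange : LinearMap.range (f' : ((Fin n → ℝ) × (Fin K → ℝ)) →ₗ[ℝ] (Fin n → ℝ)) = ⊤ := by
    apply Submodule.eq_top_of_finrank_eq
    rw [Module.finrank_fin_fun]
    exact Module.finrank_eq_of_rank_eq hr
  have hsurj : Function.Surjective f' := by
    have := LinearMap.range_eq_top.mp hrange
    simpa using this
  have hsur : f'.range = ⊤ := LinearMap.range_eq_top.mpr hsurj
  -- the kernel element
  have hwk : f' w = 0 := by simpa using hw
  set w0 : f'.ker := ⟨w, (LinearMap.mem_ker (f := f'.toLinearMap)).mpr hwk⟩ with hw0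
  -- implicit function
  set φ := hsd.implicitFunction F f' hsur with hφdef
  have hφd : HasStrictFDerivAt (φ (F p)) (f'.ker).subtypeL 0 :=
    hsd.to_implicitFunction hsur
  set g : ℝ → ((Fin n → ℝ) × (Fin K → ℝ)) := fun t => φ (F p) (t • w0) with hgdef
  have hφ0 : φ (F p) 0 = p := hsd.implicitFunction_apply_image hsur
  have hg0 : g 0 = p := by
    show φ (F p) ((0 : ℝ) • w0) = p
    rw [zero_smul]; exact hφ0
  have hline : HasDerivAt (fun t : ℝ => t • w0) w0 (0 : ℝ) := by
    simpa using (hasDerivAt_id (0 : ℝ)).smul_const w0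
  have hgd : HasDerivAt g w 0 := by
    have h0 : (0 : ℝ) • w0 = 0 := zero_smul _ _
    have hl : HasFDerivAt (φ (F p)) ((f'.ker).subtypeL) ((0 : ℝ) • w0) := by
      rw [h0]; exact hφd.hasFDerivAt
    have := hl.comp_hasDerivAt (0 : ℝ) hline
    exact this
  -- sequence of times
  set t : ℕ → ℝ := fun i => 1 / (i + 1) with htdef
  have ht0 : ∀ i, 0 < t i := fun i => by positivity
  have htlim : Filter.Tendsto t Filter.atTop (nhds 0) :=
    tendsto_one_div_add_atTop_nhds_zero_nat
  have htlim' : Filter.Tendsto t Filter.atTop (nhdsWithin 0 {(0:ℝ)}ᶜ) :=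
    tendsto_nhdsWithin_of_tendsto_nhds_of_eventually_within _ htlim
      (Filter.Eventually.of_forall fun i => (ht0 i).ne')
  -- slope limit
  have hs : Filter.Tendsto (fun i => (t i)⁻¹ • (g (t i) - p)) Filter.atTop (nhds w) := by
    have := (hasDerivAt_iff_tendsto_slope.mp hgd).comp htlim'
    simpa [Function.comp_def, slope, hg0] using this
  set s : ℕ → Fin n → ℝ := fun i => (t i)⁻¹ • ((g (t i)).1 - p.1) with hsdef
  have hsx : Filter.Tendsto s Filter.atTop (nhds w.1) := by
    have := (continuous_fst.tendsto w).comp hs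
    simpa [Function.comp_def, hsdef] using this
  -- eventual facts
  have E1 : ∀ᶠ i in Filter.atTop, s i ≠ 0 := hsx.eventually_ne hv0
  have htw0 : Filter.Tendsto (fun i => t i • w0) Filter.atTop (nhds 0) := by
    have := htlim.smul_const w0
    simpa using this
  have E2 : ∀ᶠ i in Filter.atTop, F (g (t i)) = 0 := by
    have hmap := hsd.map_implicitFunction_eq hsur
    have htw : Filter.Tendsto (fun i => ((F p), t i • w0)) Filter.atTop
        (nhds (F p, (0 : f'.ker))) :=
      Filter.Tendsto.prodMk_nhds tendsto_const_nhds htw0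
    filter_upwards [htw.eventually hmap] with i hi
    show F (hsd.implicitFunction F f' hsur (F p) (t i • w0)) = 0
    rw [hi, hF0]
  have hgc : Filter.Tendsto (fun i => g (t i)) Filter.atTop (nhds p) := by
    have hc : ContinuousAt (φ (F p)) 0 := hφd.continuousAt
    have := hc.tendsto.comp htw0
    rw [hφ0] at this
    exact this
  have E3 : ∀ᶠ i in Filter.atTop, (g (t i)).2 ∈ openSimplex K :=
    ((continuous_snd.tendsto p).comp hgc).eventually
      ((isOpen_openSimplex K).eventually_mem hα)
  obtain ⟨N, hN⟩ := Filter.eventually_atTop.mp ((E1.and E2).and E3)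
  -- the sequence
  refine ⟨fun i => (g (t (i + N))).1 - p.1, ?_, ?_, ?_, ?_⟩
  · intro i
    have hs' := (hN (i + N) (Nat.le_add_left N i)).1.1
    intro h
    apply hs'
    rw [hsdef]
    simp only [h, smul_zero]
  · have := ((continuous_fst.tendsto p).comp hgc).sub_const p.1
    rw [sub_self] at this
    exact this.comp (Filter.tendsto_add_atTop_nat N)
  · intro i
    have h2 := (hN (i + N) (Nat.le_add_left N i)).1.2
    have h3 := (hN (i + N) (Nat.le_add_left N i)).2
    refine ⟨(g (t (i + N))).2, h3, ?_⟩
    have heq : p.1 + ((g (t (i + N))).1 - p.1) = (g (t (i + N))).1 := by abel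
    rw [heq]
    show Ftilde n K f ((g (t (i + N))).1, (g (t (i + N))).2) = 0
    rw [Prod.mk.eta]
    exact h2
  · have hnorm : ∀ i, ‖(g (t (i + N))).1 - p.1‖⁻¹ • ((g (t (i + N))).1 - p.1)
        = ‖s (i + N)‖⁻¹ • s (i + N) := by
      intro i
      set c := t (i + N) with hc
      have hcpos : 0 < c := ht0 _
      have hX : (g (t (i + N))).1 - p.1 = c • s (i + N) := by
        rw [hsdef, ← hc, smul_inv_smul₀ hcpos.ne']
      rw [hX, norm_smul, Real.norm_eq_abs, abs_of_pos hcpos, mul_inv, smul_smul,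
        mul_right_comm, inv_mul_cancel₀ hcpos.ne', one_mul]
    have hcont : ContinuousAt (fun y : Fin n → ℝ => ‖y‖⁻¹ • y) w.1 :=
      (continuousAt_id.norm.inv₀ (norm_ne_zero_iff.2 hv0)).smul continuousAt_id
    have := hcont.tendsto.comp (hsx.comp (Filter.tendsto_add_atTop_nat N))
    simp only [Function.comp_def] at this
    exact (Filter.tendsto_congr fun i => (hnorm i).symm).mp this
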